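/- Let p > 1 and suppose u : (0, r₀) → ℝ is C², positive, nonincreasing (u' ≤ 0), with u(r) → +∞ as r → 0⁺, and u''(r) ≥ u(r)^p / 2 for all r ∈ (0, r₀). Then lim sup_{r→0⁺} u(r)·r^{2/(p-1)} < +∞. -/

import Mathlib

open Set Filter

theorem stmt16 (p r₀ : ℝ) (hp : 1 < p) (hr₀ : 0 < r₀)
    (u u' u'' : ℝ → ℝ)
    (hu' : ∀ r ∈ Ioo (0:ℝ) r₀, HasDerivAt u (u' r) r)
    (hu'' : ∀ r ∈ Ioo (0:ℝ) r₀, HasDerivAt u' (u'' r) r)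
    (hu''c : ContinuousOn u'' (Ioo (0:ℝ) r₀))
    (hupos : ∀ r ∈ Ioo (0:ℝ) r₀, 0 < u r)
    (hdec : ∀ r ∈ Ioo (0:ℝ) r₀, u' r ≤ 0)
    (hblow : Tendsto u (nhdsWithin 0 (Ioi 0)) atTop)
    (hconv : ∀ r ∈ Ioo (0:ℝ) r₀, u r ^ p / 2 ≤ u'' r) :
    ∃ M : ℝ, ∀ᶠ r in nhdsWithin (0:ℝ) (Ioi 0), u r * r ^ (2 / (p - 1)) ≤ M := by
  set q : ℝ := p + 1 with hqdef
  have hq0 : (0:ℝ) < q := by simp only [hqdef]; linarith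
  have hp1 : (0:ℝ) < p - 1 := by linarith
  set r₁ : ℝ := r₀ / 2 with hr₁def
  have hr₁mem : r₁ ∈ Ioo (0:ℝ) r₀ := ⟨by positivity, by simp only [hr₁def]; linarith⟩
  set E : ℝ → ℝ := fun r => q * (u' r) ^ 2 - (u r) ^ q with hEdef
  -- derivative of the energy
  have hEderiv : ∀ r ∈ Ioo (0:ℝ) r₀,
      HasDerivAt E (2 * q * (u' r * (u'' r - u r ^ p / 2))) r := by
    intro r hr
    have h1 : HasDerivAt (fun x => q * (u' x) ^ 2) (q * (2 * u' r * u'' r)) r := by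
      have := ((hu'' r hr).pow 2).const_mul q
      exact this.congr_deriv (by push_cast; ring)
    have h2 : HasDerivAt (fun x => (u x) ^ q) (u' r * q * u r ^ (q - 1)) r :=
      (hu' r hr).rpow_const (Or.inl (ne_of_gt (hupos r hr)))
    have h3 := h1.sub h2
    have hq1 : q - 1 = p := by simp only [hqdef]; ring
    rw [hq1] at h3
    exact h3.congr_deriv (by ring)
  -- the energy is nonincreasing
  have hEanti : AntitoneOn E (Ioo (0:ℝ) r₀) := by
    apply antitoneOn_of_deriv_nonpos (convex_Ioo _ _)
    · intro r hr; exact (hEderiv r hr).continuousAt.continuousWithinAt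
    · rw [interior_Ioo]; intro r hr
      exact (hEderiv r hr).differentiableAt.differentiableWithinAt
    · rw [interior_Ioo]; intro r hr
      rw [(hEderiv r hr).deriv]
      have h1 := hdec r hr
      have h2 := hconv r hr
      have : u' r * (u'' r - u r ^ p / 2) ≤ 0 :=
        mul_nonpos_of_nonpos_of_nonneg h1 (by linarith)
      nlinarith
  set C : ℝ := E r₁ with hCdef
  set K : ℝ := max 0 (-C) with hKdef
  have hK0 : 0 ≤ K := le_max_left _ _
  have hKC : -C ≤ K := le_max_right _ _
  set B : ℝ := (2 * K) ^ q⁻¹ with hBdef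
  have hB0 : 0 ≤ B := Real.rpow_nonneg (by linarith) _
  have hBq : B ^ q = 2 * K := Real.rpow_inv_rpow (by linarith) (ne_of_gt hq0)
  -- find δ where u ≥ B and r < r₁
  have hev : ∀ᶠ r in nhdsWithin (0:ℝ) (Ioi 0), B ≤ u r ∧ r ∈ Ioo (0:ℝ) r₁ := by
    have h1 : ∀ᶠ r in nhdsWithin (0:ℝ) (Ioi 0), B ≤ u r :=
      hblow.eventually (eventually_ge_atTop B)
    have h2 : Ioo (0:ℝ) r₁ ∈ nhdsWithin (0:ℝ) (Ioi 0) :=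
      Ioo_mem_nhdsGT hr₁mem.1
    filter_upwards [h1, h2] with r hr1 hr2 using ⟨hr1, hr2⟩
  obtain ⟨δ, hδpos, hδsub⟩ := mem_nhdsGT_iff_exists_Ioo_subset.mp hev
  have hsub₀ : Ioo (0:ℝ) δ ⊆ Ioo (0:ℝ) r₀ := fun r hr =>
    ⟨(hδsub hr).2.1, lt_trans (hδsub hr).2.2 hr₁mem.2⟩
  -- key pointwise bound: u^q ≤ 2q u'^2 on (0, δ)
  have key : ∀ r ∈ Ioo (0:ℝ) δ, u r ^ q ≤ 2 * q * (u' r) ^ 2 := by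
    intro r hr
    obtain ⟨hB, hr1⟩ := hδsub hr
    have hmem : r ∈ Ioo (0:ℝ) r₀ := hsub₀ hr
    have hEr : C ≤ E r := hEanti hmem hr₁mem (le_of_lt hr1.2)
    have huq : 2 * K ≤ u r ^ q := by
      rw [← hBq]; exact Real.rpow_le_rpow hB0 hB (le_of_lt hq0)
    simp only [hEdef] at hEr
    nlinarith
  -- from the key bound: a lower bound on -u'
  have hupos' : ∀ r ∈ Ioo (0:ℝ) δ, 0 < u r := fun r hr => hupos r (hsub₀ hr)
  have hsqrt : ∀ r ∈ Ioo (0:ℝ) δ,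
      u r ^ (q / 2) / Real.sqrt (2 * q) ≤ -u' r := by
    intro r hr
    have hu0 := hupos' r hr
    have h1 : u r ^ q / (2 * q) ≤ (u' r) ^ 2 := by
      rw [div_le_iff₀ (by linarith)]
      nlinarith [key r hr]
    have h2 : Real.sqrt (u r ^ q / (2 * q)) ≤ -u' r := by
      have h3 := Real.sqrt_le_sqrt h1
      rwa [Real.sqrt_sq_eq_abs, abs_of_nonpos (hdec r (hsub₀ hr))] at h3
    have h4 : Real.sqrt (u r ^ q / (2 * q)) = u r ^ (q / 2) / Real.sqrt (2 * q) := by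
      rw [Real.sqrt_div (Real.rpow_nonneg hu0.le q)]
      congr 1
      rw [Real.sqrt_eq_rpow, ← Real.rpow_mul hu0.le]
      congr 1; ring
    rwa [h4] at h2
  -- the function g = u^{-(p-1)/2} has derivative ≥ c₂ on (0, δ)
  set e : ℝ := (p - 1) / 2 with hedef
  have he0 : 0 < e := by positivity
  set c₂ : ℝ := e / Real.sqrt (2 * q) with hc₂def
  have hsq0 : 0 < Real.sqrt (2 * q) := Real.sqrt_pos.mpr (by linarith)
  have hc₂0 : 0 < c₂ := div_pos he0 hsq0
  set g : ℝ → ℝ := fun r => u r ^ (-e) with hgdef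
  have hgderiv : ∀ r ∈ Ioo (0:ℝ) δ,
      HasDerivAt g (u' r * (-e) * u r ^ (-e - 1)) r := fun r hr =>
    (hu' r (hsub₀ hr)).rpow_const (Or.inl (ne_of_gt (hupos' r hr)))
  have hglb : ∀ r ∈ Ioo (0:ℝ) δ, c₂ ≤ u' r * (-e) * u r ^ (-e - 1) := by
    intro r hr
    have hu0 := hupos' r hr
    have hexp : -e - 1 = -(q / 2) := by simp only [hedef, hqdef]; ring
    have hpow : 0 < u r ^ (-(q / 2)) := Real.rpow_pos_of_pos hu0 _
    have hmul : u r ^ (-(q / 2)) * u r ^ (q / 2) = 1 := by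
      rw [← Real.rpow_add hu0]; norm_num
    have h2 := hsqrt r hr
    have h3 : e * u r ^ (-(q / 2)) * (u r ^ (q / 2) / Real.sqrt (2 * q))
        ≤ e * u r ^ (-(q / 2)) * (-u' r) :=
      mul_le_mul_of_nonneg_left h2 (by positivity)
    have h4 : e * u r ^ (-(q / 2)) * (u r ^ (q / 2) / Real.sqrt (2 * q)) = c₂ := by
      have hre : e * u r ^ (-(q / 2)) * (u r ^ (q / 2) / Real.sqrt (2 * q))
          = (e / Real.sqrt (2 * q)) * (u r ^ (-(q / 2)) * u r ^ (q / 2)) := by ring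
      rw [hre, hmul, mul_one, hc₂def]
    rw [hexp]
    nlinarith [h3, h4]
  -- g r - c₂ r is monotone on (0, δ)
  have hmono : MonotoneOn (fun r => g r - c₂ * r) (Ioo (0:ℝ) δ) := by
    apply monotoneOn_of_deriv_nonneg (convex_Ioo _ _)
    · intro r hr
      exact ((hgderiv r hr).sub ((hasDerivAt_id r).const_mul c₂)).continuousAt.continuousWithinAt
    · rw [interior_Ioo]; intro r hr
      exact ((hgderiv r hr).sub ((hasDerivAt_id r).const_mul c₂)).differentiableAt.differentiableWithinAt
    · rw [interior_Ioo]; intro r hr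
      have hD : HasDerivAt (fun r => g r - c₂ * r) (u' r * (-e) * u r ^ (-e - 1) - c₂ * 1) r :=
        (hgderiv r hr).sub ((hasDerivAt_id r).const_mul c₂)
      rw [hD.deriv]
      have := hglb r hr
      linarith
  -- take the limit s → 0⁺ to get g r ≥ c₂ r
  have hlim : Tendsto (fun s => g s - c₂ * s) (nhdsWithin (0:ℝ) (Ioi 0)) (nhds 0) := by
    have t1 : Tendsto g (nhdsWithin (0:ℝ) (Ioi 0)) (nhds 0) := by
      have := (tendsto_rpow_neg_atTop he0).comp hblow
      exact this
    have t2 : Tendsto (fun s : ℝ => c₂ * s) (nhdsWithin (0:ℝ) (Ioi 0)) (nhds 0) := by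
      have : Tendsto (fun s : ℝ => c₂ * s) (nhds (0:ℝ)) (nhds (c₂ * 0)) :=
        (continuous_const.mul continuous_id).tendsto 0
      simpa using this.mono_left nhdsWithin_le_nhds
    simpa using t1.sub t2
  have hgr : ∀ r ∈ Ioo (0:ℝ) δ, c₂ * r ≤ g r := by
    intro r hr
    have hev2 : ∀ᶠ s in nhdsWithin (0:ℝ) (Ioi 0), g s - c₂ * s ≤ g r - c₂ * r := by
      filter_upwards [Ioo_mem_nhdsGT hr.1] with s hs
      have hs' : s ∈ Ioo (0:ℝ) δ := ⟨hs.1, lt_trans hs.2 hr.2⟩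
      exact hmono hs' hr (le_of_lt hs.2)
    have := le_of_tendsto hlim hev2
    linarith
  -- conclusion
  refine ⟨c₂ ^ (-(2 / (p - 1))), ?_⟩
  filter_upwards [Ioo_mem_nhdsGT hδpos] with r hr
  have hu0 := hupos' r hr
  have hr0 : 0 < r := hr.1
  set a : ℝ := 2 / (p - 1) with hadef
  have ha0 : 0 < a := by positivity
  have h1 : (g r) ^ (-a) ≤ (c₂ * r) ^ (-a) :=
    Real.rpow_le_rpow_of_nonpos (by positivity) (hgr r hr) (by linarith)
  have h2 : (g r) ^ (-a) = u r := by
    rw [hgdef]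
    rw [← Real.rpow_mul hu0.le]
    have : -e * -a = 1 := by
      simp only [hedef, hadef]
      field_simp
    rw [this, Real.rpow_one]
  have h3 : (c₂ * r) ^ (-a) = c₂ ^ (-a) * r ^ (-a) :=
    Real.mul_rpow hc₂0.le hr0.le
  have h4 : u r ≤ c₂ ^ (-a) * r ^ (-a) := by rw [← h2, ← h3]; exact h1
  have h5 : u r * r ^ a ≤ c₂ ^ (-a) * r ^ (-a) * r ^ a :=
    mul_le_mul_of_nonneg_right h4 (Real.rpow_nonneg hr0.le a)
  have h6 : c₂ ^ (-a) * r ^ (-a) * r ^ a = c₂ ^ (-a) := by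
    rw [mul_assoc, ← Real.rpow_add hr0]
    norm_num
  rw [h6] at h5
  exact h5
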